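/- Let n ≥ 1 and s ∈ (0,1). Set ⟨x⟩ = (1 + (|x| - 1)^4)^{1/4} for x ∈ ℝⁿ, and define φ : ℝⁿ → ℝ by φ(x) = 1 if |x| ≤ 1 and φ(x) = ⟨x⟩^{-n-2s} if |x| ≥ 1. Then there exists a constant C > 0 (depending only on n and s) such that for every x ∈ ℝⁿ with |x| ≤ 2, ∫_{ℝⁿ} |φ(x+y) + φ(x-y) - 2φ(x)| / |y|^{n+2s} dy ≤ C (in particular the integral converges). -/

import Mathlib

open MeasureTheory Real Set Filter
open scoped ENNReal NNReal

/-- The Japanese-bracket-type weight `⟨x⟩ = (1 + (|x| - 1)^4)^{1/4}`. -/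
noncomputable def jbr {n : ℕ} (x : EuclideanSpace ℝ (Fin n)) : ℝ :=
  (1 + (‖x‖ - 1) ^ 4) ^ ((1 : ℝ) / 4)

/-- The test function `φ(x) = 1` if `|x| ≤ 1`, `φ(x) = ⟨x⟩^{-n-2s}` if `|x| ≥ 1`. -/
noncomputable def phi (n : ℕ) (s : ℝ) (x : EuclideanSpace ℝ (Fin n)) : ℝ :=
  if ‖x‖ ≤ 1 then 1 else jbr x ^ (-((n : ℝ) + 2 * s))

lemma hasDerivAt_maxpow (k : ℕ) (hk : 2 ≤ k) (t : ℝ) :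
    HasDerivAt (fun t : ℝ => max t 0 ^ k) ((k : ℝ) * max t 0 ^ (k - 1)) t := by
  rcases lt_trichotomy t 0 with ht | rfl | ht
  · have h0 : (fun t : ℝ => max t 0 ^ k) =ᶠ[nhds t] fun _ => (0 : ℝ) := by
      filter_upwards [Iio_mem_nhds ht] with u hu
      rw [max_eq_right (le_of_lt hu), zero_pow (by omega)]
    have h := (hasDerivAt_const t (0 : ℝ)).congr_of_eventuallyEq h0
    rw [max_eq_right ht.le, zero_pow (by omega : k - 1 ≠ 0), mul_zero]
    exact h
  · rw [hasDerivAt_iff_tendsto_slope]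
    have hval : (k : ℝ) * max (0:ℝ) 0 ^ (k - 1) = 0 := by
      rw [max_self, zero_pow (by omega : k - 1 ≠ 0), mul_zero]
    rw [hval]
    apply squeeze_zero_norm' (a := fun u : ℝ => ‖u‖)
    · filter_upwards [self_mem_nhdsWithin,
        (eventually_abs_sub_lt (0:ℝ) one_pos).filter_mono nhdsWithin_le_nhds] with u hu hu1
      have hu0 : u ≠ 0 := hu
      have h1 : |u| ≤ 1 := by simpa using hu1.le
      have hs : slope (fun t : ℝ => max t 0 ^ k) 0 u = max u 0 ^ k / u := by
        simp [slope, max_self, zero_pow (by omega : k ≠ 0), inv_mul_eq_div]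
      rw [hs, norm_div, Real.norm_eq_abs, Real.norm_eq_abs,
        div_le_iff₀ (abs_pos.mpr hu0)]
      calc |max u 0 ^ k| = max u 0 ^ k := abs_of_nonneg (pow_nonneg (le_max_right _ _) _)
        _ ≤ |u| ^ k := pow_le_pow_left₀ (le_max_right _ _) (max_le (le_abs_self u) (abs_nonneg u)) _
        _ ≤ |u| ^ 2 := pow_le_pow_of_le_one (abs_nonneg u) h1 hk
        _ = |u| * |u| := by ring
    · exact (continuous_norm.tendsto' 0 0 norm_zero).mono_left nhdsWithin_le_nhds
  · have h0 : (fun t : ℝ => max t 0 ^ k) =ᶠ[nhds t] fun u => u ^ k := by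
      filter_upwards [Ioi_mem_nhds ht] with u hu
      rw [max_eq_left (le_of_lt hu)]
    have h := (hasDerivAt_pow k t).congr_of_eventuallyEq h0
    rw [max_eq_left ht.le]
    exact h

lemma contDiff_maxpow4 : ContDiff ℝ 2 (fun t : ℝ => max t 0 ^ 4) := by
  have h4 : ∀ t : ℝ, HasDerivAt (fun t : ℝ => max t 0 ^ 4) ((4:ℝ) * max t 0 ^ 3) t := by
    intro t; exact_mod_cast hasDerivAt_maxpow 4 (by norm_num) t
  have hd4 : deriv (fun t : ℝ => max t 0 ^ 4) = fun t => (4:ℝ) * max t 0 ^ 3 :=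
    funext fun t => (h4 t).deriv
  have h3 : ∀ t : ℝ, HasDerivAt (fun t : ℝ => (4:ℝ) * max t 0 ^ 3) ((4:ℝ) * ((3:ℝ) * max t 0 ^ 2)) t := by
    intro t
    exact ((by exact_mod_cast hasDerivAt_maxpow 3 (by norm_num) t :
      HasDerivAt (fun t : ℝ => max t 0 ^ 3) ((3:ℝ) * max t 0 ^ 2) t)).const_mul 4
  have hd3 : deriv (fun t : ℝ => (4:ℝ) * max t 0 ^ 3) = fun t => (4:ℝ) * ((3:ℝ) * max t 0 ^ 2) :=
    funext fun t => (h3 t).deriv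
  rw [show (2 : WithTop ℕ∞) = 1 + 1 by norm_num, contDiff_succ_iff_deriv]
  refine ⟨fun t => (h4 t).differentiableAt, by simp, ?_⟩
  rw [hd4, show (1 : WithTop ℕ∞) = 0 + 1 by norm_num, contDiff_succ_iff_deriv]
  refine ⟨fun t => (h3 t).differentiableAt, by simp, ?_⟩
  rw [hd3, contDiff_zero]
  exact continuous_const.mul (continuous_const.mul ((continuous_id.max continuous_const).pow 2))

lemma phi_eq (n : ℕ) (s : ℝ) (x : EuclideanSpace ℝ (Fin n)) :
    phi n s x = (1 + max (‖x‖ - 1) 0 ^ 4) ^ (-(((n : ℝ) + 2 * s) / 4)) := by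
  unfold phi jbr
  by_cases h : ‖x‖ ≤ 1
  · rw [if_pos h, max_eq_right (by linarith : ‖x‖ - 1 ≤ 0)]
    norm_num
  · rw [if_neg h, max_eq_left (by push_neg at h; linarith : (0:ℝ) ≤ ‖x‖ - 1)]
    have h1 : (0:ℝ) ≤ 1 + (‖x‖ - 1) ^ 4 := by positivity
    rw [← Real.rpow_mul h1]
    norm_num
    ring_nf

lemma phi_nonneg (n : ℕ) (s : ℝ) (x : EuclideanSpace ℝ (Fin n)) : 0 ≤ phi n s x := by
  rw [phi_eq]; positivity

lemma phi_le_one (n : ℕ) (s : ℝ) (hs : 0 ≤ s) (x : EuclideanSpace ℝ (Fin n)) :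
    phi n s x ≤ 1 := by
  rw [phi_eq]
  apply Real.rpow_le_one_of_one_le_of_nonpos
  · nlinarith [pow_nonneg (le_max_right (‖x‖ - 1) 0) 4]
  · have : (0:ℝ) ≤ (n : ℝ) := Nat.cast_nonneg n
    nlinarith

lemma contDiff_phi (n : ℕ) (s : ℝ) : ContDiff ℝ 2 (phi n s) := by
  have hrep : phi n s = fun x : EuclideanSpace ℝ (Fin n) =>
      (1 + max (‖x‖ - 1) 0 ^ 4) ^ (-(((n : ℝ) + 2 * s) / 4)) := funext (phi_eq n s)
  rw [hrep, contDiff_iff_contDiffAt]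
  intro x
  by_cases hx : ‖x‖ < 1
  · apply ContDiffAt.congr_of_eventuallyEq (contDiffAt_const (c := (1:ℝ)))
    filter_upwards [Metric.isOpen_ball.mem_nhds (by simpa [Metric.mem_ball,
      dist_zero_right] using hx : x ∈ Metric.ball (0 : EuclideanSpace ℝ (Fin n)) 1)] with y hy
    rw [Metric.mem_ball, dist_zero_right] at hy
    rw [max_eq_right (by linarith : ‖y‖ - 1 ≤ 0)]
    norm_num
  · push_neg at hx
    have hx0 : x ≠ 0 := by
      intro h; rw [h, norm_zero] at hx; linarith
    have h1 : ContDiffAt ℝ 2 (fun y : EuclideanSpace ℝ (Fin n) => max (‖y‖ - 1) 0 ^ 4) x :=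
      contDiff_maxpow4.contDiffAt.comp x ((contDiffAt_norm (𝕜 := ℝ) hx0).sub contDiffAt_const)
    have h2 : ContDiffAt ℝ 2 (fun y : EuclideanSpace ℝ (Fin n) => 1 + max (‖y‖ - 1) 0 ^ 4) x :=
      contDiffAt_const.add h1
    have h3 : (1 : ℝ) + max (‖x‖ - 1) 0 ^ 4 ≠ 0 := by
      have : (0:ℝ) ≤ max (‖x‖ - 1) 0 ^ 4 := by positivity
      linarith
    exact (Real.contDiffAt_rpow_const_of_ne h3).comp x h2

lemma second_diff_bound (n : ℕ) (s : ℝ) :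
    ∃ M : ℝ, 0 ≤ M ∧ ∀ x y : EuclideanSpace ℝ (Fin n), ‖x‖ ≤ 2 → ‖y‖ ≤ 1 →
      |phi n s (x + y) + phi n s (x - y) - 2 * phi n s x| ≤ M * ‖y‖ ^ 2 := by
  let E := EuclideanSpace ℝ (Fin n)
  have hφ : ContDiff ℝ 2 (phi n s) := contDiff_phi n s
  set g : E → (E →L[ℝ] ℝ) := fderiv ℝ (phi n s) with hgdef
  have hg : ContDiff ℝ 1 g := hφ.fderiv_right (le_refl 2)
  have hgc : Continuous (fderiv ℝ g) := hg.continuous_fderiv one_ne_zero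
  set K : Set E := Metric.closedBall 0 4 with hKdef
  obtain ⟨M₀, hM₀⟩ := (isCompact_closedBall (0:E) 4).exists_bound_of_continuousOn
    (f := fderiv ℝ g) (by exact hgc.continuousOn)
  set M' : ℝ := max M₀ 0 with hM'def
  have hM' : 0 ≤ M' := le_max_right _ _
  have hLip : ∀ a ∈ K, ∀ b ∈ K, ‖g b - g a‖ ≤ M' * ‖b - a‖ := by
    intro a ha b hb
    exact Convex.norm_image_sub_le_of_norm_fderiv_le
      (fun z _ => (hg.differentiable one_ne_zero).differentiableAt)
      (fun z hz => le_trans (hM₀ z hz) (le_max_left _ _))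
      (convex_closedBall _ _) ha hb
  refine ⟨2 * M', by positivity, fun x y hx hy => ?_⟩
  set F : ℝ → ℝ := fun t => phi n s (x + t • y) + phi n s (x - t • y) with hFdef
  set F' : ℝ → ℝ := fun t => g (x + t • y) y - g (x - t • y) y with hF'def
  have hmem : ∀ t ∈ Icc (0:ℝ) 1, (x + t • y) ∈ K ∧ (x - t • y) ∈ K := by
    intro t ht
    have h1 : ‖t • y‖ ≤ 1 := by
      rw [norm_smul, Real.norm_eq_abs, abs_of_nonneg ht.1]
      calc t * ‖y‖ ≤ 1 * 1 := by
            apply mul_le_mul ht.2 hy (norm_nonneg y) zero_le_one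
        _ = 1 := by ring
    constructor
    · simp only [hKdef, Metric.mem_closedBall, dist_zero_right]
      refine le_trans (norm_add_le _ _) ?_
      linarith
    · simp only [hKdef, Metric.mem_closedBall, dist_zero_right]
      refine le_trans (norm_sub_le _ _) ?_
      linarith
  have hderiv : ∀ t ∈ Icc (0:ℝ) 1, HasDerivAt F (F' t) t := by
    intro t _
    have hc1 : HasDerivAt (fun t : ℝ => x + t • y) y t := by
      have := ((hasDerivAt_id t).smul_const y).const_add x
      simpa using this
    have hc2 : HasDerivAt (fun t : ℝ => x - t • y) (-y) t := by
      have := ((hasDerivAt_id t).smul_const y).const_sub x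
      simpa using this
    have hd := hφ.differentiable (by norm_num)
    have h1 : HasDerivAt (fun t : ℝ => phi n s (x + t • y)) (g (x + t • y) y) t :=
      (hd (x + t • y)).hasFDerivAt.comp_hasDerivAt (l := phi n s) t hc1
    have h2 : HasDerivAt (fun t : ℝ => phi n s (x - t • y)) (g (x - t • y) (-y)) t :=
      (hd (x - t • y)).hasFDerivAt.comp_hasDerivAt (l := phi n s) t hc2
    have := h1.add h2
    have := this; simp only [map_neg, sub_eq_add_neg] at this ⊢
    exact this
  have hbound : ∀ t ∈ Icc (0:ℝ) 1, ‖F' t‖ ≤ 2 * M' * ‖y‖ ^ 2 := by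
    intro t ht
    obtain ⟨hp, hm⟩ := hmem t ht
    have hdiff : (x + t • y) - (x - t • y) = (2 * t) • y := by
      rw [two_mul, add_smul]; abel
    have h1 : ‖F' t‖ ≤ ‖g (x + t • y) - g (x - t • y)‖ * ‖y‖ := by
      have : F' t = (g (x + t • y) - g (x - t • y)) y := by
        simp [hF'def, ContinuousLinearMap.sub_apply]
      rw [this]
      exact (g (x + t • y) - g (x - t • y)).le_opNorm y
    have h2 : ‖g (x + t • y) - g (x - t • y)‖ ≤ M' * (2 * ‖y‖) := by
      refine le_trans (hLip _ hm _ hp) ?_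
      rw [hdiff, norm_smul, Real.norm_eq_abs, abs_of_nonneg (by linarith [ht.1] : (0:ℝ) ≤ 2 * t)]
      have : 2 * t * ‖y‖ ≤ 2 * ‖y‖ := by nlinarith [norm_nonneg y, ht.2, ht.1]
      nlinarith [hM']
    calc ‖F' t‖ ≤ M' * (2 * ‖y‖) * ‖y‖ :=
          le_trans h1 (mul_le_mul_of_nonneg_right h2 (norm_nonneg y))
      _ = 2 * M' * ‖y‖ ^ 2 := by ring
  have key := (convex_Icc (0:ℝ) 1).norm_image_sub_le_of_norm_hasDerivWithin_le
    (fun t ht => (hderiv t ht).hasDerivWithinAt) hbound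
    (left_mem_Icc.mpr zero_le_one) (right_mem_Icc.mpr zero_le_one)
  have hF1 : F 1 = phi n s (x + y) + phi n s (x - y) := by simp [hFdef]
  have hF0 : F 0 = 2 * phi n s x := by simp [hFdef]; ring
  rw [hF1, hF0] at key
  simpa using key

lemma lintegral_ball_rpow_lt_top (n : ℕ) (hn : 1 ≤ n) (a : ℝ) (ha : 0 < a) (han : a < n) :
    ∫⁻ y in Metric.ball (0 : EuclideanSpace ℝ (Fin n)) 1,
      ENNReal.ofReal (‖y‖ ^ (-a)) < ⊤ := by
  set E := EuclideanSpace ℝ (Fin n)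
  haveI : Nonempty (Fin n) := Fin.pos_iff_nonempty.mp (by omega)
  set μ : Measure E := volume.restrict (Metric.ball 0 1) with hμ
  set V : ℝ≥0∞ := volume (Metric.ball (0:E) 1) with hV
  have hVlt : V < ⊤ := measure_ball_lt_top
  have hmeas : AEMeasurable (fun y : E => ‖y‖ ^ (-a)) μ := by
    apply Measurable.aemeasurable; fun_prop
  have hnn : 0 ≤ᵐ[μ] fun y : E => ‖y‖ ^ (-a) :=
    Filter.Eventually.of_forall fun y => Real.rpow_nonneg (norm_nonneg y) _
  rw [show (∫⁻ y in Metric.ball (0:E) 1, ENNReal.ofReal (‖y‖ ^ (-a))) =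
      ∫⁻ y, ENNReal.ofReal (‖y‖ ^ (-a)) ∂μ from rfl,
    lintegral_eq_lintegral_meas_lt μ hnn hmeas]
  have hsplit : (Ioi (0:ℝ)) = Ioc (0:ℝ) 1 ∪ Ioi (1:ℝ) := (Ioc_union_Ioi_eq_Ioi zero_le_one).symm
  rw [hsplit, lintegral_union measurableSet_Ioi Ioc_disjoint_Ioi_same]
  have h1 : (∫⁻ t in Ioc (0:ℝ) 1, μ {y : E | t < ‖y‖ ^ (-a)}) ≤ V * 1 := by
    calc (∫⁻ t in Ioc (0:ℝ) 1, μ {y : E | t < ‖y‖ ^ (-a)})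
        ≤ ∫⁻ _ in Ioc (0:ℝ) 1, V := by
          apply lintegral_mono
          intro t
          calc μ {y : E | t < ‖y‖ ^ (-a)} ≤ μ univ := measure_mono (subset_univ _)
            _ = V := by rw [hμ, Measure.restrict_apply_univ]
      _ = V * volume (Ioc (0:ℝ) 1) := by rw [setLIntegral_const]
      _ = V * 1 := by rw [Real.volume_Ioc]; norm_num
  have h2 : (∫⁻ t in Ioi (1:ℝ), μ {y : E | t < ‖y‖ ^ (-a)}) < ⊤ := by
    have hb : ∀ t ∈ Ioi (1:ℝ), μ {y : E | t < ‖y‖ ^ (-a)} ≤ ENNReal.ofReal (t ^ (-((n:ℝ)/a))) * V := by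
      intro t ht
      have ht0 : (0:ℝ) < t := lt_trans one_pos ht
      have hsub : {y : E | t < ‖y‖ ^ (-a)} ⊆ Metric.ball (0:E) (t ^ (-(1/a))) := by
        intro y hy
        simp only [mem_setOf_eq] at hy
        have hy0 : ‖y‖ ≠ 0 := by
          intro h
          rw [h, Real.zero_rpow (by intro h; apply absurd (neg_eq_zero.mp h); exact ne_of_gt ha : -a ≠ 0)] at hy
          · linarith
        have hypos : 0 < ‖y‖ := lt_of_le_of_ne (norm_nonneg y) (Ne.symm hy0)
        have := Real.rpow_lt_rpow_of_neg ht0 hy (by simp [one_div]; positivity : -(1/a) < 0)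
        rw [← Real.rpow_mul (norm_nonneg y)] at this
        have hexp : -a * -(1/a) = 1 := by field_simp
        rw [hexp, Real.rpow_one] at this
        rw [Metric.mem_ball, dist_zero_right]
        exact this
      calc μ {y : E | t < ‖y‖ ^ (-a)} ≤ volume (Metric.ball (0:E) (t ^ (-(1/a)))) :=
            le_trans (measure_mono hsub) (Measure.restrict_le_self _)
        _ = ENNReal.ofReal ((t ^ (-(1/a))) ^ (Module.finrank ℝ E)) * V :=
            Measure.addHaar_ball _ _ (Real.rpow_nonneg ht0.le _)
        _ = ENNReal.ofReal (t ^ (-((n:ℝ)/a))) * V := by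
            congr 1
            rw [← Real.rpow_natCast (t ^ (-(1/a))), ← Real.rpow_mul ht0.le,
              finrank_euclideanSpace_fin]
            congr 1
            field_simp
    calc (∫⁻ t in Ioi (1:ℝ), μ {y : E | t < ‖y‖ ^ (-a)})
        ≤ ∫⁻ t in Ioi (1:ℝ), ENNReal.ofReal (t ^ (-((n:ℝ)/a))) * V :=
          setLIntegral_mono_ae (by fun_prop) (Filter.Eventually.of_forall hb)
      _ = (∫⁻ t in Ioi (1:ℝ), ENNReal.ofReal (t ^ (-((n:ℝ)/a)))) * V := lintegral_mul_const _ (by fun_prop)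
      _ < ⊤ := by
          apply ENNReal.mul_lt_top _ hVlt
          have hint : IntegrableOn (fun t : ℝ => t ^ (-((n:ℝ)/a))) (Ioi 1) := by
            apply integrableOn_Ioi_rpow_of_lt _ one_pos
            rw [neg_lt_neg_iff, lt_div_iff₀ ha]
            linarith
          have h := hint.2
          rw [hasFiniteIntegral_iff_ofReal] at h
          · exact h
          · refine (ae_restrict_iff' measurableSet_Ioi).mpr (Filter.Eventually.of_forall ?_)
            intro t ht
            exact Real.rpow_nonneg (le_trans zero_le_one (le_of_lt ht)) _
  calc (∫⁻ t in Ioc (0:ℝ) 1, μ {y : E | t < ‖y‖ ^ (-a)}) +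
      (∫⁻ t in Ioi (1:ℝ), μ {y : E | t < ‖y‖ ^ (-a)}) ≤ V * 1 + (∫⁻ t in Ioi (1:ℝ), μ {y : E | t < ‖y‖ ^ (-a)}) := add_le_add_left h1 _
    _ < ⊤ := ENNReal.add_lt_top.mpr ⟨by simpa using hVlt, h2⟩

/-- For `n ≥ 1` and `s ∈ (0,1)`, there is a constant `C > 0` (depending only on
`n` and `s`) such that for every `x` with `|x| ≤ 2`,
`∫ |φ(x+y) + φ(x-y) - 2φ(x)| / |y|^{n+2s} dy ≤ C`
(in particular the integral converges). -/
theorem stmt_8 (n : ℕ) (hn : 1 ≤ n) (s : ℝ) (hs : s ∈ Set.Ioo (0 : ℝ) 1) :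
    ∃ C : ℝ, 0 < C ∧ ∀ x : EuclideanSpace ℝ (Fin n), ‖x‖ ≤ 2 →
      ∫⁻ y : EuclideanSpace ℝ (Fin n),
          ENNReal.ofReal
            (|phi n s (x + y) + phi n s (x - y) - 2 * phi n s x| /
              ‖y‖ ^ ((n : ℝ) + 2 * s))
        ≤ ENNReal.ofReal C := by
  obtain ⟨hs0, hs1⟩ := hs
  obtain ⟨M, hM0, hM⟩ := second_diff_bound n s
  set E := EuclideanSpace ℝ (Fin n)
  set r : ℝ := (n : ℝ) + 2 * s with hrdef
  have hn1 : (1 : ℝ) ≤ (n : ℝ) := by exact_mod_cast hn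
  have hr0 : 0 < r := by positivity
  set a : ℝ := (n : ℝ) - (1 - s) with hadef
  have ha0 : 0 < a := by simp only [hadef]; linarith
  have han : a < (n : ℝ) := by simp only [hadef]; linarith
  set B1 : ℝ≥0∞ := ENNReal.ofReal M *
    ∫⁻ y in Metric.ball (0 : E) 1, ENNReal.ofReal (‖y‖ ^ (-a)) with hB1def
  set B2 : ℝ≥0∞ := ENNReal.ofReal (4 * 2 ^ r) *
    ∫⁻ y : E, ENNReal.ofReal ((1 + ‖y‖) ^ (-r)) with hB2def
  have hfinrank : (Module.finrank ℝ E : ℝ) < r := by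
    rw [show Module.finrank ℝ E = n from finrank_euclideanSpace_fin]
    simp only [hrdef]; linarith
  have hB1 : B1 < ⊤ :=
    ENNReal.mul_lt_top ENNReal.ofReal_lt_top (lintegral_ball_rpow_lt_top n hn a ha0 han)
  have hB2 : B2 < ⊤ :=
    ENNReal.mul_lt_top ENNReal.ofReal_lt_top (finite_integral_one_add_norm hfinrank)
  set B : ℝ≥0∞ := B1 + B2 with hBdef
  have hBne : B ≠ ⊤ := by
    simp only [hBdef, ENNReal.add_ne_top]
    exact ⟨hB1.ne, hB2.ne⟩
  refine ⟨B.toReal + 1, by positivity, fun x hx => ?_⟩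
  set f : E → ℝ≥0∞ := fun y =>
    ENNReal.ofReal (|phi n s (x + y) + phi n s (x - y) - 2 * phi n s x| / ‖y‖ ^ r) with hfdef
  have hsplit : (∫⁻ y : E, f y) =
      (∫⁻ y in Metric.ball (0 : E) 1, f y) + ∫⁻ y in (Metric.ball (0 : E) 1)ᶜ, f y :=
    (lintegral_add_compl f measurableSet_ball).symm
  have hball : (∫⁻ y in Metric.ball (0 : E) 1, f y) ≤ B1 := by
    have hpt : ∀ y ∈ Metric.ball (0 : E) 1,
        f y ≤ ENNReal.ofReal (M * ‖y‖ ^ (-a)) := by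
      intro y hy
      rw [Metric.mem_ball, dist_zero_right] at hy
      by_cases hy0 : y = 0
      · simp only [hfdef, hy0, add_zero, sub_zero]
        have : phi n s x + phi n s x - 2 * phi n s x = 0 := by ring
        rw [this, abs_zero, zero_div, ENNReal.ofReal_zero]
        exact zero_le
      · have hypos : 0 < ‖y‖ := norm_pos_iff.mpr hy0
        apply ENNReal.ofReal_le_ofReal
        have hnum : |phi n s (x + y) + phi n s (x - y) - 2 * phi n s x| ≤ M * ‖y‖ ^ 2 :=
          hM x y hx hy.le
        calc |phi n s (x + y) + phi n s (x - y) - 2 * phi n s x| / ‖y‖ ^ r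
            ≤ (M * ‖y‖ ^ 2) / ‖y‖ ^ r := by
              have hden : (0:ℝ) < ‖y‖ ^ r := Real.rpow_pos_of_pos hypos r
              gcongr
          _ = M * ‖y‖ ^ ((2 : ℝ) - r) := by
              rw [show ‖y‖ ^ 2 = ‖y‖ ^ ((2 : ℝ) : ℝ) from by
                  rw [show ((2:ℝ):ℝ) = ((2:ℕ):ℝ) by norm_num, Real.rpow_natCast],
                mul_div_assoc, ← Real.rpow_sub hypos]
          _ ≤ M * ‖y‖ ^ (-a) := by
              apply mul_le_mul_of_nonneg_left _ hM0
              apply Real.rpow_le_rpow_of_exponent_ge hypos hy.le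
              simp only [hadef, hrdef]; linarith
    calc (∫⁻ y in Metric.ball (0 : E) 1, f y)
        ≤ ∫⁻ y in Metric.ball (0 : E) 1, ENNReal.ofReal (M * ‖y‖ ^ (-a)) :=
          setLIntegral_mono (by fun_prop) hpt
      _ = ∫⁻ y in Metric.ball (0 : E) 1, ENNReal.ofReal M * ENNReal.ofReal (‖y‖ ^ (-a)) := by
          apply lintegral_congr
          intro y
          rw [ENNReal.ofReal_mul hM0]
      _ = B1 := by
          rw [hB1def, lintegral_const_mul' _ _ ENNReal.ofReal_ne_top]
  have hcompl : (∫⁻ y in (Metric.ball (0 : E) 1)ᶜ, f y) ≤ B2 := by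
    have hpt : ∀ y ∈ (Metric.ball (0 : E) 1)ᶜ,
        f y ≤ ENNReal.ofReal (4 * 2 ^ r * (1 + ‖y‖) ^ (-r)) := by
      intro y hy
      rw [mem_compl_iff, Metric.mem_ball, dist_zero_right, not_lt] at hy
      have hypos : (0 : ℝ) < ‖y‖ := lt_of_lt_of_le one_pos hy
      apply ENNReal.ofReal_le_ofReal
      have hnum : |phi n s (x + y) + phi n s (x - y) - 2 * phi n s x| ≤ 4 := by
        have b1 := phi_nonneg n s (x + y); have b2 := phi_le_one n s hs0.le (x + y)
        have b3 := phi_nonneg n s (x - y); have b4 := phi_le_one n s hs0.le (x - y)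
        have b5 := phi_nonneg n s x; have b6 := phi_le_one n s hs0.le x
        rw [abs_le]; constructor <;> nlinarith
      have hpow : (1 + ‖y‖) ^ r ≤ 2 ^ r * ‖y‖ ^ r := by
        rw [← Real.mul_rpow (by norm_num) hypos.le]
        apply Real.rpow_le_rpow (by positivity) (by linarith) hr0.le
      have hden : (0:ℝ) < ‖y‖ ^ r := Real.rpow_pos_of_pos hypos r
      have hden2 : (0:ℝ) < (1 + ‖y‖) ^ r := Real.rpow_pos_of_pos (by linarith) r
      calc |phi n s (x + y) + phi n s (x - y) - 2 * phi n s x| / ‖y‖ ^ r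
          ≤ 4 / ‖y‖ ^ r := by gcongr
        _ ≤ 4 * 2 ^ r / (1 + ‖y‖) ^ r := by
            rw [div_le_div_iff₀ hden hden2]
            nlinarith
        _ = 4 * 2 ^ r * (1 + ‖y‖) ^ (-r) := by
            rw [Real.rpow_neg (by linarith), div_eq_mul_inv]
    calc (∫⁻ y in (Metric.ball (0 : E) 1)ᶜ, f y)
        ≤ ∫⁻ y in (Metric.ball (0 : E) 1)ᶜ, ENNReal.ofReal (4 * 2 ^ r * (1 + ‖y‖) ^ (-r)) :=
          setLIntegral_mono (by fun_prop) hpt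
      _ ≤ ∫⁻ y : E, ENNReal.ofReal (4 * 2 ^ r * (1 + ‖y‖) ^ (-r)) :=
          setLIntegral_le_lintegral _ _
      _ = ∫⁻ y : E, ENNReal.ofReal (4 * 2 ^ r) * ENNReal.ofReal ((1 + ‖y‖) ^ (-r)) := by
          apply lintegral_congr
          intro y
          rw [ENNReal.ofReal_mul (by positivity)]
      _ = B2 := by
          rw [hB2def, lintegral_const_mul' _ _ ENNReal.ofReal_ne_top]
  calc (∫⁻ y : E, f y) ≤ B1 + B2 := by
        rw [hsplit]; exact add_le_add hball hcompl
    _ = ENNReal.ofReal B.toReal := by rw [ENNReal.ofReal_toReal hBne]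
    _ ≤ ENNReal.ofReal (B.toReal + 1) := ENNReal.ofReal_le_ofReal (by linarith)
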